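/- The regularized smoothing Ψ̃^R(S; L) = max_{||X||_op ≤ 1} {⟨S, X⟩ − (1/2) tr(X^T L X)} + (1/2) tr(L) satisfies upper stability with constant 1/2: for any PSD matrices L₁ ⪯ L₂ and all S, Ψ̃^R(S; L₂) − Ψ̃^R(S; L₁) ≤ (1/2)(tr(L₂) − tr(L₁)). -/

import Mathlib

open Matrix Finset
open scoped Classical

noncomputable def psqrt {m : ℕ} (A : Matrix (Fin m) (Fin m) ℝ) : Matrix (Fin m) (Fin m) ℝ :=
  if h : A.PosSemidef then (h.1.eigenvectorUnitary.1 * diagonal (((↑) : ℝ → ℝ) ∘ (√·) ∘ h.1.eigenvalues) *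
    (star h.1.eigenvectorUnitary : Matrix (Fin m) (Fin m) ℝ)) else 0

noncomputable def nuclearNorm {m : ℕ} {n : Type*} [Fintype n]
    (A : Matrix (Fin m) n ℝ) : ℝ :=
  (psqrt (A * Aᵀ)).trace

noncomputable def ip {m : ℕ} {n : Type*} [Fintype n] (A B : Matrix (Fin m) n ℝ) : ℝ :=
  (Aᵀ * B).trace

/-- The operator-norm unit ball `{X : ‖X‖_op ≤ 1}`, characterized by `Xᵀ X ⪯ I`. -/
def opBall {m n : ℕ} : Set (Matrix (Fin m) (Fin n) ℝ) :=
  {X | ((1 : Matrix (Fin n) (Fin n) ℝ) - Xᵀ * X).PosSemidef}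

/-- The regularized smoothing
`Ψ̃^R(S; L) = max_{‖X‖_op ≤ 1} {⟨S, X⟩ − (1/2) tr(Xᵀ L X)} + (1/2) tr(L)`. -/
noncomputable def psiR {m n : ℕ} (S : Matrix (Fin m) (Fin n) ℝ)
    (L : Matrix (Fin m) (Fin m) ℝ) : ℝ :=
  sSup ((fun X : Matrix (Fin m) (Fin n) ℝ =>
    ip S X - 1 / 2 * (Xᵀ * L * X).trace) '' opBall) + 1 / 2 * L.trace

lemma diag_nonneg' {k : ℕ} {A : Matrix (Fin k) (Fin k) ℝ} (hA : A.PosSemidef)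
    (i : Fin k) : 0 ≤ A i i := by
  have := hA.dotProduct_mulVec_nonneg (Pi.single i 1)
  simpa [dotProduct, Matrix.mulVec, Pi.single_apply, Finset.sum_ite_eq',
    Finset.sum_ite_eq] using this

lemma trace_nonneg' {k : ℕ} {A : Matrix (Fin k) (Fin k) ℝ} (hA : A.PosSemidef) :
    0 ≤ A.trace := by
  rw [Matrix.trace]
  exact Finset.sum_nonneg fun i _ => diag_nonneg' hA i

lemma psd_sandwich {k l : ℕ} {L : Matrix (Fin k) (Fin k) ℝ} (hL : L.PosSemidef)
    (X : Matrix (Fin k) (Fin l) ℝ) : (Xᵀ * L * X).PosSemidef := by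
  have := hL.conjTranspose_mul_mul_same X
  simpa [Matrix.conjTranspose_eq_transpose_of_trivial, Matrix.star_eq_conjTranspose] using this

lemma entry_le_one {k l : ℕ} {X : Matrix (Fin k) (Fin l) ℝ} (hX : X ∈ opBall)
    (i : Fin k) (j : Fin l) : |X i j| ≤ 1 := by
  have hd : 0 ≤ ((1 : Matrix (Fin l) (Fin l) ℝ) - Xᵀ * X) j j := diag_nonneg' hX j
  have h1 : (Xᵀ * X) j j ≤ 1 := by
    simpa [Matrix.sub_apply, Matrix.one_apply] using hd
  have hsq : X i j ^ 2 ≤ 1 := by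
    calc X i j ^ 2 ≤ ∑ a, X a j ^ 2 := by
          exact Finset.single_le_sum (f := fun a => X a j ^ 2)
            (fun a _ => sq_nonneg _) (Finset.mem_univ i)
      _ = (Xᵀ * X) j j := by simp [Matrix.mul_apply, Matrix.transpose_apply, sq]
      _ ≤ 1 := h1
  nlinarith [abs_nonneg (X i j), sq_abs (X i j)]

lemma ip_bound {k l : ℕ} (S : Matrix (Fin k) (Fin l) ℝ) {X : Matrix (Fin k) (Fin l) ℝ}
    (hX : X ∈ opBall) : ip S X ≤ ∑ i, ∑ j, |S i j| := by
  rw [ip, Matrix.trace]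
  calc ∑ j, (Sᵀ * X) j j = ∑ j, ∑ i, S i j * X i j := by
        simp [Matrix.mul_apply, Matrix.transpose_apply]
    _ ≤ ∑ j, ∑ i, |S i j| := by
        refine Finset.sum_le_sum fun j _ => Finset.sum_le_sum fun i _ => ?_
        calc S i j * X i j ≤ |S i j * X i j| := le_abs_self _
          _ = |S i j| * |X i j| := abs_mul _ _
          _ ≤ |S i j| * 1 := by
              exact mul_le_mul_of_nonneg_left (entry_le_one hX i j) (abs_nonneg _)
          _ = |S i j| := mul_one _
    _ = ∑ i, ∑ j, |S i j| := Finset.sum_comm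

/-- the regularized smoothing satisfies upper stability with constant
`1/2`: for PSD matrices `L₁ ⪯ L₂` and all `S`,
`Ψ̃^R(S; L₂) − Ψ̃^R(S; L₁) ≤ (1/2)(tr L₂ − tr L₁)`. -/
theorem stmt9 {m n : ℕ} (S : Matrix (Fin m) (Fin n) ℝ)
    (L₁ L₂ : Matrix (Fin m) (Fin m) ℝ) (h₁ : L₁.PosSemidef)
    (h₁₂ : (L₂ - L₁).PosSemidef) :
    psiR S L₂ - psiR S L₁ ≤ 1 / 2 * (L₂.trace - L₁.trace) := by
  have hbdd : BddAbove ((fun X : Matrix (Fin m) (Fin n) ℝ =>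
      ip S X - 1 / 2 * (Xᵀ * L₁ * X).trace) '' opBall) := by
    refine ⟨∑ i, ∑ j, |S i j|, ?_⟩
    rintro y ⟨X, hX, rfl⟩
    have h1 : 0 ≤ (Xᵀ * L₁ * X).trace := trace_nonneg' (psd_sandwich h₁ X)
    have h2 := ip_bound S hX
    dsimp only
    linarith
  have hne : ((fun X : Matrix (Fin m) (Fin n) ℝ =>
      ip S X - 1 / 2 * (Xᵀ * L₂ * X).trace) '' opBall).Nonempty := by
    refine ⟨_, ⟨0, ?_, rfl⟩⟩
    simp only [opBall, Set.mem_setOf_eq, Matrix.transpose_zero, Matrix.mul_zero, sub_zero]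
    exact Matrix.PosSemidef.one
  have hsup : sSup ((fun X : Matrix (Fin m) (Fin n) ℝ =>
      ip S X - 1 / 2 * (Xᵀ * L₂ * X).trace) '' opBall) ≤
      sSup ((fun X : Matrix (Fin m) (Fin n) ℝ =>
      ip S X - 1 / 2 * (Xᵀ * L₁ * X).trace) '' opBall) := by
    refine csSup_le hne ?_
    rintro y ⟨X, hX, rfl⟩
    have hle : (Xᵀ * L₁ * X).trace ≤ (Xᵀ * L₂ * X).trace := by
      have h0 : 0 ≤ (Xᵀ * (L₂ - L₁) * X).trace := trace_nonneg' (psd_sandwich h₁₂ X)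
      have : Xᵀ * (L₂ - L₁) * X = Xᵀ * L₂ * X - Xᵀ * L₁ * X := by
        rw [sub_eq_add_neg, sub_eq_add_neg, Matrix.mul_add, Matrix.add_mul, Matrix.mul_neg, Matrix.neg_mul]
      rw [this, Matrix.trace_sub] at h0
      linarith
    have : ip S X - 1 / 2 * (Xᵀ * L₂ * X).trace ≤
        ip S X - 1 / 2 * (Xᵀ * L₁ * X).trace := by linarith
    exact this.trans (le_csSup hbdd ⟨X, hX, rfl⟩)
  unfold psiR
  linarith
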